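/- Let p : X̄ → X be a covering map and let x̄₀ ∈ X̄ with p(x̄₀) = x₀. Then the induced homomorphism p_* : π₁(X̄, x̄₀) → π₁(X, x₀) given by post-composition with p is injective, and for every k ≥ 2 the induced homomorphism p_* : π_k(X̄, x̄₀) → π_k(X, x₀) given by post-composition with p is a group isomorphism. -/

import Mathlib

open Topology

/-- The map on homotopy groups (with cube-indexing type `N`) induced by post-composition with
a continuous map `q : X → Y` sending the basepoint `x` to `y`. -/
def HomotopyGroup.inducedMap (N : Type*) {X Y : Type*} [TopologicalSpace X]
    [TopologicalSpace Y] (q : C(X, Y)) (x : X) (y : Y) (hqx : q x = y) :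
    HomotopyGroup N X x → HomotopyGroup N Y y :=
  Quotient.map
    (fun f => ⟨q.comp f.1, fun z hz => by
      rw [ContinuousMap.comp_apply, f.2 z hz, hqx]⟩)
    (fun f g h => h.elim fun F => ⟨F.compContinuousMap q⟩)


open Topology Set unitInterval Topology.Homotopy in
section

noncomputable section

variable {X' X : Type*} [TopologicalSpace X'] [TopologicalSpace X] {p : X' → X}

open Topology Set unitInterval Topology.Homotopy

namespace CoveringLift

/-- Homotopy lifting property for covering maps: a local-lift gluing argument. -/
theorem hlp (hp : IsCoveringMap p) {A : Type*} [TopologicalSpace A]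
    (f : C(I × A, X)) (g₀ : A → X') (hg₀ : Continuous g₀)
    (h₀ : ∀ a, p (g₀ a) = f (0, a)) :
    ∃ g : C(I × A, X'), (∀ z, p (g z) = f z) ∧ ∀ a, g (0, a) = g₀ a := by
  classical
  -- extend `f` to real time
  set F : ℝ × A → X := fun z => f (projIcc 0 1 zero_le_one z.1, z.2) with hF_def
  have hF : Continuous F :=
    f.continuous.comp (((continuous_projIcc).comp continuous_fst).prodMk continuous_snd)
  have hFI : ∀ (s : I) (a : A), F (↑s, a) = f (s, a) := by
    intro s a
    have : projIcc 0 1 zero_le_one (↑s : ℝ) = s := by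
      rw [projIcc_of_mem _ s.2]
    simp only [hF_def, this]
  have hFmin1 : ∀ (s : ℝ) (a : A), F (min s 1, a) = F (s, a) := by
    intro s a
    rcases le_total s 1 with h | h
    · rw [min_eq_left h]
    · rw [min_eq_right h]
      simp only [hF_def]
      rw [projIcc_of_right_le _ h, projIcc_of_right_le _ le_rfl]
  have hFmin0 : ∀ (s : ℝ) (a : A), F (min s 0, a) = F (0, a) := by
    intro s a
    simp only [hF_def]
    rw [projIcc_of_le_left _ (min_le_right s 0), projIcc_of_le_left _ le_rfl]
  -- local lifts
  have key : ∀ a₀ : A, ∃ W : Set A, IsOpen W ∧ a₀ ∈ W ∧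
      ∃ L : ℝ × ↥W → X', Continuous L ∧ (∀ (s : ℝ) (a : ↥W), p (L (s, a)) = F (s, ↑a)) ∧
        ∀ a : ↥W, L (0, a) = g₀ ↑a := by
    intro a₀
    -- evenly covered neighborhoods
    have hrange : IsClopen (range p) := by
      have loc : ∀ x : X, ∃ U : Set X, IsOpen U ∧ x ∈ U ∧
          ∀ y ∈ U, (y ∈ range p ↔ x ∈ range p) := by
        intro x
        obtain ⟨_, U, hxU, hU, _, H, hH⟩ := hp x
        refine ⟨U, hU, hxU, fun y hy => ⟨fun ⟨e', he'⟩ => ?_, fun ⟨e, he⟩ => ?_⟩⟩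
        · have hmem : e' ∈ p ⁻¹' U := by rw [mem_preimage, he']; exact hy
          obtain ⟨e'', he''⟩ := (H ⟨e', hmem⟩).2
          exact ⟨e'', he''⟩
        · have i : p ⁻¹' {x} := ⟨e, he⟩
          refine ⟨(H.symm (⟨y, hy⟩, i)).1, ?_⟩
          have := hH (H.symm (⟨y, hy⟩, i))
          rw [H.apply_symm_apply] at this
          exact this.symm
      refine ⟨?_, ?_⟩
      · rw [← isOpen_compl_iff, isOpen_iff_forall_mem_open]
        intro x hx
        obtain ⟨U, hU, hxU, hUr⟩ := loc x
        exact ⟨U, fun y hy => fun hyr => hx ((hUr y hy).mp hyr), hU, hxU⟩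
      · rw [isOpen_iff_forall_mem_open]
        intro x hx
        obtain ⟨U, hU, hxU, hUr⟩ := loc x
        exact ⟨U, fun y hy => (hUr y hy).mpr hx, hU, hxU⟩
    have hne : ∀ s : ℝ, Nonempty (p ⁻¹' {F (s, a₀)}) := by
      have hsub := (isPreconnected_range (hF.comp (continuous_id.prodMk continuous_const) :
        Continuous fun s : ℝ => F (s, a₀))).subset_isClopen hrange ?_
      · intro s
        obtain ⟨e, he⟩ := hsub (mem_range_self s)
        exact ⟨⟨e, he⟩⟩
      · refine ⟨F (0, a₀), mem_range_self 0, g₀ a₀, ?_⟩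
        rw [h₀ a₀]
        rw [show (0:ℝ) = ((0:I):ℝ) from (Set.Icc.coe_zero).symm]; exact (hFI 0 a₀).symm
    have mem_base : ∀ s : ℝ, F (s, a₀) ∈ (hp (F (s, a₀))).toTrivialization.baseSet :=
      fun s => (hp (F (s, a₀))).mem_toTrivialization_baseSet
    have h1 : ∀ s : ℝ, ∃ u v : Set _, IsOpen u ∧ IsOpen v ∧ s ∈ u ∧ a₀ ∈ v ∧
        u ×ˢ v ⊆ F ⁻¹' (hp (F (s, a₀))).toTrivialization.baseSet := by
      intro s
      have hopen : IsOpen (F ⁻¹' (hp (F (s, a₀))).toTrivialization.baseSet) :=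
        (hp (F (s, a₀))).toTrivialization.open_baseSet.preimage hF
      obtain ⟨u, v, hu, hv, hsu, hav, hsub⟩ := isOpen_prod_iff.mp hopen s a₀ (mem_base s)
      exact ⟨u, v, hu, hv, hsu, hav, hsub⟩
    choose u v hu hv hsu hav hsub using h1
    obtain ⟨δ, hδ, hleb⟩ := lebesgue_number_lemma_of_metric (isCompact_Icc (a := (0:ℝ)) (b := 1))
      hu (fun x _ => mem_iUnion.mpr ⟨x, hsu x⟩)
    obtain ⟨n₀, hn₀⟩ := exists_nat_one_div_lt hδ
    set n : ℕ := n₀ + 1 with hn_def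
    have hn : (1 : ℝ) / n < δ := by push_cast [hn_def]; exact hn₀
    have hnpos : (0 : ℝ) < n := by positivity
    -- for each j < n, pick the index
    have hchoice : ∀ j : ℕ, j < n → ∃ i : ℝ, Metric.ball ((j : ℝ) / n) δ ⊆ u i := by
      intro j hj
      refine hleb ((j : ℝ) / n) ⟨by positivity, ?_⟩
      rw [div_le_one hnpos]
      exact_mod_cast hj.le
    choose idx hidx using hchoice
    set W : Set A := ⋂ j : Fin n, v (idx j j.2) with hW_def
    have hWopen : IsOpen W := isOpen_iInter_of_finite fun j => hv _
    have hWmem : a₀ ∈ W := mem_iInter.mpr fun j => hav _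
    have cov : ∀ j : ℕ, ∀ hj : j < n, ∀ s ∈ Icc ((j : ℝ) / n) (((j : ℝ) + 1) / n), ∀ a ∈ W,
        F (s, a) ∈ (hp (F (idx j hj, a₀))).toTrivialization.baseSet := by
      intro j hj s hs a ha
      apply hsub (idx j hj)
      constructor
      · apply hidx j hj
        rw [Metric.mem_ball, Real.dist_eq, abs_of_nonneg (by linarith [hs.1])]
        have : ((j : ℝ) + 1) / n - (j : ℝ) / n = 1 / n := by ring
        linarith [hs.2]
      · exact mem_iInter.mp ha ⟨j, hj⟩
    -- inductive construction of the lift on `ℝ × ↥W`, stopped at time j/n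
    have claim : ∀ j : ℕ, j ≤ n → ∃ L : ℝ × ↥W → X', Continuous L ∧
        (∀ (s : ℝ) (a : ↥W), p (L (s, a)) = F (min s ((j : ℝ) / n), ↑a)) ∧
        ∀ a : ↥W, L (0, a) = g₀ ↑a := by
      intro j
      induction j with
      | zero =>
        intro _
        refine ⟨fun z => g₀ ↑z.2, hg₀.comp (continuous_subtype_val.comp continuous_snd), ?_, ?_⟩
        · intro s a
          rw [h₀ ↑a]
          have h1 : F (0, ↑a) = f (0, ↑a) := by
            rw [show (0:ℝ) = ((0:I):ℝ) from (Set.Icc.coe_zero).symm]; exact hFI 0 ↑a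
          rw [← h1, ← hFmin0 s ↑a]
          norm_num
        · intro a; rfl
      | succ j ih =>
        intro hj1
        have hj : j < n := hj1
        obtain ⟨L, hLc, hLp, hL0⟩ := ih (le_of_lt hj)
        set t := (hp (F (idx j hj, a₀))).toTrivialization with ht_def
        set c : ℝ := (j : ℝ) / n with hc_def
        set c' : ℝ := ((j : ℝ) + 1) / n with hc'_def
        have hcc' : c ≤ c' := by
          rw [hc_def, hc'_def, div_le_div_iff₀ hnpos hnpos]
          nlinarith
        have hcIcc : c ∈ Icc c c' := ⟨le_rfl, hcc'⟩
        have hsrc : ∀ a : ↥W, L (c, a) ∈ t.source := by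
          intro a
          rw [t.mem_source, hLp c a, min_self]
          exact cov j hj c hcIcc ↑a a.2
        -- the next piece
        set R : ℝ × ↥W → X' := fun z =>
          t.toPartialHomeomorph.symm (F (max (min z.1 c') c, ↑z.2), (t (L (c, z.2))).2)
          with hR_def
        have hmemT : ∀ z : ℝ × ↥W,
            (F (max (min z.1 c') c, ↑z.2), (t (L (c, z.2))).2) ∈ t.target := by
          intro z
          rw [t.mem_target]
          exact cov j hj _ ⟨le_max_right _ _, max_le (min_le_right _ _) hcc'⟩ ↑z.2 z.2.2
        have hRc : Continuous R := by
          have h2 : Continuous fun z : ℝ × ↥W => (t (L (c, z.2))).2 := by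
            have hφ : Continuous fun a : ↥W => L (c, a) :=
              hLc.comp (continuous_const.prodMk continuous_id)
            have h3 : Continuous ((⇑t) ∘ fun a : ↥W => L (c, a)) :=
              t.toPartialHomeomorph.continuousOn.comp_continuous hφ hsrc
            have h4 : Continuous fun a : ↥W => t (L (c, a)) := h3
            exact (continuous_snd.comp h4).comp continuous_snd
          have h1 : Continuous fun z : ℝ × ↥W => F (max (min z.1 c') c, ↑z.2) :=
            hF.comp ((((continuous_fst.min continuous_const).max continuous_const).prodMk
              (continuous_subtype_val.comp continuous_snd)))
          exact t.toPartialHomeomorph.continuousOn_symm.comp_continuous (h1.prodMk h2) hmemT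
        have hmatch : ∀ z : ℝ × ↥W, z.1 = c → L z = R z := by
          rintro ⟨s, a⟩ h
          have hz' : s = c := h
          show L (s, a) = t.toPartialHomeomorph.symm (F (s ⊓ c' ⊔ c, ↑a), (t (L (c, a))).2)
          rw [hz', min_eq_left hcc', max_self]
          have hfix : F (c, ↑a) = p (L (c, a)) := by rw [hLp, min_self]
          rw [hfix]
          exact (t.symm_apply_mk_proj (hsrc a)).symm
        have hcast : ((j + 1 : ℕ) : ℝ) / n = c' := by push_cast [hc'_def]; ring
        refine ⟨fun z => if z.1 ≤ c then L z else R z,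
          hLc.if_le hRc continuous_fst continuous_const hmatch, ?_, ?_⟩
        · intro s a
          rw [hcast]
          show p (if s ≤ c then L (s, a) else R (s, a)) = F (s ⊓ c', ↑a)
          by_cases h : s ≤ c
          · rw [if_pos h, hLp, min_eq_left (h.trans hcc'), min_eq_left h]
          · push_neg at h
            rw [if_neg (not_le.mpr h)]
            show p (t.toOpenPartialHomeomorph.symm (F (s ⊓ c' ⊔ c, ↑a), (t (L (c, a))).2)) = _
            rw [t.proj_symm_apply (hmemT (s, a))]
            congr 2
            rw [max_eq_left (le_min h.le hcc')]
        · intro a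
          show (if (0:ℝ) ≤ c then L (0, a) else R (0, a)) = g₀ ↑a
          rw [if_pos (by positivity : (0:ℝ) ≤ c), hL0]
    obtain ⟨L, hLc, hLp, hL0⟩ := claim n le_rfl
    refine ⟨W, hWopen, hWmem, L, hLc, ?_, hL0⟩
    intro s a
    rw [hLp, div_self (ne_of_gt hnpos), hFmin1]
  -- glue the local lifts
  choose W hWopen hWmem L hLc hLp hL0 using key
  have slice_eq : ∀ (a : A) (b₀ b₁ : A) (h0 : a ∈ W b₀) (h1 : a ∈ W b₁) (s : ℝ),
      L b₀ (s, ⟨a, h0⟩) = L b₁ (s, ⟨a, h1⟩) := by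
    intro a b₀ b₁ h0 h1
    have heq := hp.eq_of_comp_eq (g₁ := fun s : ℝ => L b₀ (s, ⟨a, h0⟩))
      (g₂ := fun s : ℝ => L b₁ (s, ⟨a, h1⟩))
      ((hLc b₀).comp (continuous_id.prodMk continuous_const))
      ((hLc b₁).comp (continuous_id.prodMk continuous_const))
      (funext fun s => by
        show p (L b₀ _) = p (L b₁ _)
        rw [hLp, hLp])
      0 (by
        show L b₀ (0, ⟨a, h0⟩) = L b₁ (0, ⟨a, h1⟩)
        rw [hL0, hL0])
    exact fun s => congrFun heq s
  set g : I × A → X' := fun z => L z.2 (↑z.1, ⟨z.2, hWmem z.2⟩) with hg_def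
  have hgc : Continuous g := by
    rw [continuous_iff_continuousAt]
    intro z₀
    have hopen : IsOpen ((univ : Set I) ×ˢ W z₀.2) := isOpen_univ.prod (hWopen z₀.2)
    have hmem : z₀ ∈ (univ : Set I) ×ˢ W z₀.2 := ⟨trivial, hWmem z₀.2⟩
    refine ContinuousOn.continuousAt ?_ (hopen.mem_nhds hmem)
    rw [continuousOn_iff_continuous_restrict]
    have hres : ((univ : Set I) ×ˢ W z₀.2).restrict g = fun z : ↥((univ : Set I) ×ˢ W z₀.2) =>
        L z₀.2 (↑(z : I × A).1, ⟨(z : I × A).2, z.2.2⟩) := by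
      funext z
      exact slice_eq _ _ _ _ _ _
    refine Continuous.congr ?_ (fun z => (congrFun hres z).symm)
    exact (hLc z₀.2).comp
      ((continuous_subtype_val.comp (continuous_fst.comp continuous_subtype_val)).prodMk
        (Continuous.subtype_mk (continuous_snd.comp continuous_subtype_val) _))
  refine ⟨⟨g, hgc⟩, ?_, ?_⟩
  · rintro ⟨s, a⟩
    show p (L a _) = f (s, a)
    rw [hLp, hFI]
  · intro a
    show L a (↑(0 : I), ⟨a, hWmem a⟩) = g₀ a
    rw [show ((0:I):ℝ) = (0:ℝ) from Set.Icc.coe_zero]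
    exact hL0 a ⟨a, hWmem a⟩

open Topology.Homotopy

/-- Lifting of maps from cubes through a covering map,
with prescribed value at the corner. -/
theorem cube_lift (hp : IsCoveringMap p) (n : ℕ) :
    ∀ (N : Type) [DecidableEq N] [Fintype N], Fintype.card N = n →
    ∀ (f : C((N → I), X)) (e : X'), p e = f (fun _ => 0) →
    ∃ g : C((N → I), X'), (∀ y, p (g y) = f y) ∧ g (fun _ => 0) = e := by
  induction n with
  | zero =>
    intro N _ _ hcard f e he
    have hNe : IsEmpty N := Fintype.card_eq_zero_iff.mp hcard
    refine ⟨ContinuousMap.const _ e, ?_, rfl⟩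
    intro y
    have hy : y = fun _ => 0 := funext fun i => (hNe.elim i)
    rw [hy, ← he]
    rfl
  | succ n ih =>
    intro N _ _ hcard f e he
    have hne : Nonempty N := Fintype.card_pos_iff.mp (by omega)
    set i : N := Classical.arbitrary N with hi_def
    have hcard' : Fintype.card {j // j ≠ i} = n := by
      have := Fintype.card_subtype_compl (fun j : N => j = i)
      rw [Fintype.card_subtype_eq] at this
      simpa [hcard] using this
    let f' : C(I × ({j // j ≠ i} → I), X) := f.comp (Cube.insertAt i : C(I × ({j // j ≠ i} → I), N → I))
    have hins0 : (Cube.insertAt i) ((0 : I), fun _ => (0 : I)) = fun _ => (0 : I) := by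
      funext j
      rw [Homeomorph.funSplitAt_symm_apply]
      split <;> rfl
    have hbot : p e = f' ((0 : I), fun _ => (0 : I)) := by
      rw [he]
      exact congrArg f hins0.symm
    obtain ⟨gb, hgb, hgb0⟩ := ih {j // j ≠ i} hcard'
      (f'.comp ⟨fun y => ((0 : I), y), (continuous_const.prodMk continuous_id)⟩) e hbot
    obtain ⟨G, hG, hG0⟩ := hlp hp f' (⇑gb) gb.continuous (fun a => hgb a)
    refine ⟨G.comp (Cube.splitAt i : C(N → I, I × ({j // j ≠ i} → I))), ?_, ?_⟩
    · intro y
      show p (G ((Cube.splitAt i) y)) = f y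
      rw [hG ((Cube.splitAt i) y)]
      show f ((Cube.insertAt i) ((Cube.splitAt i) y)) = f y
      rw [Homeomorph.symm_apply_apply]
    · show G ((Cube.splitAt i) fun _ => 0) = e
      have hsp : (Cube.splitAt i) (fun _ => (0 : I)) = ((0 : I), fun _ => (0 : I)) := rfl
      rw [hsp, hG0, hgb0]

/-- The boundary of a cube with at least two coordinates is path-connected,
hence preconnected. -/
theorem boundary_preconnected (N : Type) [DecidableEq N] (i₀ j₀ : N) (hij : i₀ ≠ j₀) :
    IsPreconnected (Cube.boundary N) := by
  have key : ∀ y ∈ Cube.boundary N, JoinedIn (Cube.boundary N) y (fun _ => 0) := by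
    rintro y ⟨k, hk⟩
    obtain ⟨l, hlk⟩ : ∃ l : N, l ≠ k := by
      by_cases h : k = i₀
      · exact ⟨j₀, by rw [h]; exact hij.symm⟩
      · exact ⟨i₀, fun hh => h hh.symm⟩
    set z : N → I := Function.update y l 0 with hz_def
    have hpath1 : JoinedIn (Cube.boundary N) y z := by
      refine ⟨⟨⟨fun t => Function.update y l (min (unitInterval.symm t) (y l)), ?_⟩, ?_, ?_⟩, ?_⟩
      · refine continuous_pi fun m => ?_
        simp only [Function.update_apply]
        by_cases hm : m = l
        · simp only [hm, if_true]
          exact (unitInterval.continuous_symm.min continuous_const)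
        · simp only [hm, if_false]
          exact continuous_const
      · show Function.update y l (min (unitInterval.symm 0) (y l)) = y
        rw [unitInterval.symm_zero, min_eq_right (unitInterval.le_one' (t := y l)), Function.update_eq_self]
      · show Function.update y l (min (unitInterval.symm 1) (y l)) = z
        rw [unitInterval.symm_one, min_eq_left (unitInterval.nonneg' (t := y l)), hz_def]
      · intro t
        refine ⟨k, ?_⟩
        show Function.update y l (min (unitInterval.symm t) (y l)) k = 0 ∨
          Function.update y l (min (unitInterval.symm t) (y l)) k = 1
        rwa [Function.update_of_ne (Ne.symm hlk)]
    have hpath2 : JoinedIn (Cube.boundary N) z (fun _ => 0) := by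
      refine ⟨⟨⟨fun t => fun m => min (unitInterval.symm t) (z m), ?_⟩, ?_, ?_⟩, ?_⟩
      · exact continuous_pi fun m =>
          ((unitInterval.continuous_symm.comp continuous_id).min continuous_const)
      · show (fun m => min (unitInterval.symm 0) (z m)) = z
        funext m
        rw [unitInterval.symm_zero, min_eq_right (unitInterval.le_one' (t := z m))]
      · show (fun m => min (unitInterval.symm 1) (z m)) = fun _ => (0 : I)
        funext m
        rw [unitInterval.symm_one, min_eq_left (unitInterval.nonneg' (t := z m))]
      · intro t
        refine ⟨l, Or.inl ?_⟩
        show min (unitInterval.symm t) (z l) = 0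
        rw [hz_def, Function.update_self, min_eq_right (unitInterval.nonneg' (t := unitInterval.symm t))]
    exact hpath1.trans hpath2
  have hpc : IsPathConnected (Cube.boundary N) := by
    refine ⟨fun _ => 0, ⟨i₀, Or.inl rfl⟩, ?_⟩
    intro y hy
    exact (key y hy).symm
  exact hpc.isConnected.isPreconnected

/-- Postcomposition commutes with `transAt`. -/
theorem comp_transAt {Y : Type*} [TopologicalSpace Y] {N : Type} [DecidableEq N]
    {x : X} {y : Y} (q : C(X, Y)) (h : q x = y) (i : N) (f g : Ω^ N X x) :
    (⟨q.comp (GenLoop.transAt i f g).1, fun z hz => by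
        rw [ContinuousMap.comp_apply, (GenLoop.transAt i f g).2 z hz, h]⟩ : Ω^ N Y y) =
      GenLoop.transAt i
        ⟨q.comp f.1, fun z hz => by rw [ContinuousMap.comp_apply, f.2 z hz, h]⟩
        ⟨q.comp g.1, fun z hz => by rw [ContinuousMap.comp_apply, g.2 z hz, h]⟩ := by
  ext1 z
  show q ((GenLoop.transAt i f g) z) = (GenLoop.transAt i _ _) z
  simp only [GenLoop.transAt, GenLoop.coe_copy, GenLoop.mk_apply]
  rw [apply_ite q]
  split_ifs <;> rfl

/-- The induced map on homotopy groups is multiplicative. -/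
theorem induced_mul {Y : Type*} [TopologicalSpace Y] {N : Type} [DecidableEq N] [Nonempty N]
    (q : C(X, Y)) (x : X) (y : Y) (h : q x = y) (a b : HomotopyGroup N X x) :
    HomotopyGroup.inducedMap N q x y h (a * b) =
      HomotopyGroup.inducedMap N q x y h a * HomotopyGroup.inducedMap N q x y h b := by
  refine Quotient.inductionOn₂ a b ?_
  intro f g
  have i : N := Classical.arbitrary N
  show HomotopyGroup.inducedMap N q x y h
      (((· * ·) : _ → _ → HomotopyGroup N X x) ⟦f⟧ ⟦g⟧) =
    ((· * ·) : _ → _ → HomotopyGroup N Y y)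
      (HomotopyGroup.inducedMap N q x y h ⟦f⟧) (HomotopyGroup.inducedMap N q x y h ⟦g⟧)
  rw [HomotopyGroup.mul_spec (i := i), HomotopyGroup.inducedMap, Quotient.map_mk,
    Quotient.map_mk, Quotient.map_mk, comp_transAt q h]
  exact (HomotopyGroup.mul_spec (i := i)).symm

/-- Injectivity of induced maps on homotopy groups for covering maps. -/
theorem induced_injective (hp : IsCoveringMap p) (x' : X') (x₀ : X) (hx : p x' = x₀)
    (N : Type) [Nonempty N] :
    Function.Injective (HomotopyGroup.inducedMap N ⟨p, hp.continuous⟩ x' x₀ hx) := by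
  intro a b
  refine Quotient.inductionOn₂ a b ?_
  intro f g hfg
  rw [HomotopyGroup.inducedMap, Quotient.map_mk, Quotient.map_mk] at hfg
  obtain ⟨F⟩ := Quotient.exact hfg
  have h0b : (fun _ => (0 : I)) ∈ Cube.boundary N := ⟨Classical.arbitrary N, Or.inl rfl⟩
  obtain ⟨G, hG, hG0⟩ := hlp hp F.toContinuousMap (⇑f.1) f.1.continuous
    (fun a => (F.apply_zero a).symm)
  have hbd : ∀ y ∈ Cube.boundary N, ∀ t : I, G (t, y) = f.1 y := by
    intro y hy t
    have hc : Continuous fun t : I => G (t, y) :=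
      G.continuous.comp (continuous_id.prodMk continuous_const)
    have hcst := hp.const_of_comp hc (fun s s' => by
      show p (G (s, y)) = p (G (s', y))
      rw [hG (s, y), hG (s', y)]
      show F (s, y) = F (s', y)
      rw [F.eq_fst s hy, F.eq_fst s' hy]) t 0
    rw [hcst, hG0]
  have h1 : ∀ y, G (1, y) = g.1 y := by
    have heq := hp.eq_of_comp_eq (g₁ := fun y => G (1, y)) (g₂ := ⇑g.1)
      (G.continuous.comp (continuous_const.prodMk continuous_id)) g.1.continuous
      (funext fun y => by
        show p (G (1, y)) = p (g.1 y)
        rw [hG (1, y)]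
        exact F.apply_one y)
      (fun _ => 0)
      (by
        show G (1, fun _ => 0) = g.1 fun _ => 0
        rw [hbd _ h0b 1]
        show f.1 _ = g.1 _
        rw [f.2 _ h0b, g.2 _ h0b])
    exact fun y => congrFun heq y
  apply Quotient.sound
  exact ⟨{ toFun := fun z => G z
           continuous_toFun := G.continuous
           map_zero_left := fun y => hG0 y
           map_one_left := fun y => h1 y
           prop' := fun t z hz => hbd z hz t }⟩

/-- Surjectivity of the induced map on higher homotopy groups for covering maps. -/
theorem induced_surjective (hp : IsCoveringMap p) (x' : X') (x₀ : X) (hx : p x' = x₀) (m : ℕ) :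
    Function.Surjective
      (HomotopyGroup.inducedMap (Fin (m + 2)) ⟨p, hp.continuous⟩ x' x₀ hx) := by
  intro c
  refine Quotient.inductionOn c ?_
  intro γ
  have h0b : (fun _ => (0 : I)) ∈ Cube.boundary (Fin (m + 2)) := ⟨0, Or.inl rfl⟩
  obtain ⟨g, hg, hg0⟩ := cube_lift hp (m + 2) (Fin (m + 2)) (by simp) γ.1 x'
    (by rw [hx]; exact (γ.2 _ h0b).symm)
  have hconst : ∀ y ∈ Cube.boundary (Fin (m + 2)), g y = x' := by
    intro y hy
    have hcst := hp.constOn_of_comp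
      (boundary_preconnected (Fin (m + 2)) 0 1 Fin.zero_ne_one)
      g.continuous.continuousOn
      (fun a ha a' ha' => by rw [hg a, hg a', γ.2 a ha, γ.2 a' ha']) hy h0b
    rw [hcst, hg0]
  refine ⟨⟦⟨g, hconst⟩⟧, ?_⟩
  rw [HomotopyGroup.inducedMap, Quotient.map_mk]
  exact congrArg (Quotient.mk _) (GenLoop.ext _ _ fun y => hg y)


end CoveringLift

end
end

open Topology Set unitInterval Topology.Homotopy

/-- If `p : X' → X` is a covering map with `p x' = x₀`, then the induced homomorphism
`π₁(X', x') → π₁(X, x₀)` is injective, and for every `k ≥ 2` (written `k = m + 2`) the induced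
homomorphism `π_k(X', x') → π_k(X, x₀)` is a group isomorphism (a multiplicative bijection). -/
theorem isCoveringMap_inducedMap_homotopyGroup
    {X' X : Type*} [TopologicalSpace X'] [TopologicalSpace X]
    (p : X' → X) (hp : IsCoveringMap p) (x' : X') (x₀ : X) (hx : p x' = x₀) :
    (Function.Injective
        (HomotopyGroup.inducedMap (Fin 1) ⟨p, hp.continuous⟩ x' x₀ hx) ∧
      ∀ a b : HomotopyGroup (Fin 1) X' x',
        HomotopyGroup.inducedMap (Fin 1) ⟨p, hp.continuous⟩ x' x₀ hx (a * b) =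
          HomotopyGroup.inducedMap (Fin 1) ⟨p, hp.continuous⟩ x' x₀ hx a *
            HomotopyGroup.inducedMap (Fin 1) ⟨p, hp.continuous⟩ x' x₀ hx b) ∧
    ∀ m : ℕ,
      Function.Bijective
        (HomotopyGroup.inducedMap (Fin (m + 2)) ⟨p, hp.continuous⟩ x' x₀ hx) ∧
      ∀ a b : HomotopyGroup (Fin (m + 2)) X' x',
        HomotopyGroup.inducedMap (Fin (m + 2)) ⟨p, hp.continuous⟩ x' x₀ hx (a * b) =
          HomotopyGroup.inducedMap (Fin (m + 2)) ⟨p, hp.continuous⟩ x' x₀ hx a *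
            HomotopyGroup.inducedMap (Fin (m + 2)) ⟨p, hp.continuous⟩ x' x₀ hx b := by
  refine ⟨⟨CoveringLift.induced_injective hp x' x₀ hx (Fin 1),
    fun a b => CoveringLift.induced_mul ⟨p, hp.continuous⟩ x' x₀ hx a b⟩,
    fun m => ⟨⟨?_, ?_⟩, ?_⟩⟩
  · exact CoveringLift.induced_injective hp x' x₀ hx (Fin (m + 2))
  · exact CoveringLift.induced_surjective hp x' x₀ hx m
  · exact fun a b => CoveringLift.induced_mul ⟨p, hp.continuous⟩ x' x₀ hx a b
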